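/- For each positive definite integral binary quadratic form Q of negative discriminant, the order of the stabilizer of Q in PSL_2(Z) is 3 if Q is SL_2(Z)-equivalent to a constant multiple of X^2+XY+Y^2, is 2 if Q is SL_2(Z)-equivalent to a constant multiple of X^2+Y^2, and is 1 otherwise. -/

import Mathlib

/-- `SL(2,ℤ)`. -/
abbrev SL2 := Matrix.SpecialLinearGroup (Fin 2) ℤ

/-- The Gram matrix `[[2a, b], [b, 2c]]` of the binary quadratic form `aX² + bXY + cY²`. -/
def gram (a b c : ℤ) : Matrix (Fin 2) (Fin 2) ℤ := !![2*a, b; b, 2*c]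

/-- The stabilizer of the form with Gram matrix `gram a b c` under the right action
`Q ↦ Q∘γ`, i.e. `M ↦ γᵀ M γ`, as a subset of `SL(2,ℤ)`. -/
def stabSet (a b c : ℤ) : Set SL2 :=
  {γ : SL2 | (Matrix.transpose (γ : Matrix (Fin 2) (Fin 2) ℤ)) * gram a b c * (γ : Matrix (Fin 2) (Fin 2) ℤ)
      = gram a b c}

/-- The image of the stabilizer in `PSL(2,ℤ) = SL(2,ℤ)/center`; since the center `{±I}`
acts trivially on forms, this is the stabilizer of the form in `PSL(2,ℤ)`. -/
def stabPSL (a b c : ℤ) : Set (SL2 ⧸ Subgroup.center SL2) :=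
  (fun γ => (QuotientGroup.mk γ : SL2 ⧸ Subgroup.center SL2)) '' stabSet a b c

/-- `Q` is `SL(2,ℤ)`-equivalent to a constant multiple of the form `a₀X² + b₀XY + c₀Y²`. -/
def EquivToMultOf (a b c a₀ b₀ c₀ : ℤ) : Prop :=
  ∃ γ : SL2, ∃ m : ℤ,
    (Matrix.transpose (γ : Matrix (Fin 2) (Fin 2) ℤ)) * gram a b c * (γ : Matrix (Fin 2) (Fin 2) ℤ)
      = m • gram a₀ b₀ c₀

namespace Aux

/- basic matrices -/
def Tk (k : ℤ) : SL2 := ⟨!![1, k; 0, 1], by simp [Matrix.det_fin_two_of]⟩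
def Sm : SL2 := ⟨!![0, -1; 1, 0], by simp [Matrix.det_fin_two_of]⟩
def negI : SL2 := ⟨!![-1, 0; 0, -1], by simp [Matrix.det_fin_two_of]⟩
def u : SL2 := ⟨!![0, -1; 1, 1], by simp [Matrix.det_fin_two_of]⟩
def u2 : SL2 := ⟨!![-1, -1; 1, 0], by simp [Matrix.det_fin_two_of]⟩
def nu : SL2 := ⟨!![0, 1; -1, -1], by simp [Matrix.det_fin_two_of]⟩
def nu2 : SL2 := ⟨!![1, 1; -1, 0], by simp [Matrix.det_fin_two_of]⟩
def nS : SL2 := ⟨!![0, 1; -1, 0], by simp [Matrix.det_fin_two_of]⟩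

lemma SL2_ext {γ δ : SL2} (h00 : γ.1 0 0 = δ.1 0 0) (h01 : γ.1 0 1 = δ.1 0 1)
    (h10 : γ.1 1 0 = δ.1 1 0) (h11 : γ.1 1 1 = δ.1 1 1) : γ = δ :=
  Subtype.ext (by ext i j; fin_cases i <;> fin_cases j <;> assumption)

lemma transpose_lit (a b c d : ℤ) :
    Matrix.transpose !![a, b; c, d] = !![a, c; b, d] := by
  ext i j; fin_cases i <;> fin_cases j <;> rfl

lemma gram_action (a b c : ℤ) (γ : SL2) :
    (Matrix.transpose (γ : Matrix (Fin 2) (Fin 2) ℤ)) * gram a b c * (γ : Matrix (Fin 2) (Fin 2) ℤ)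
    = gram (a * (γ.1 0 0)^2 + b * (γ.1 0 0) * (γ.1 1 0) + c * (γ.1 1 0)^2)
        (2*a*(γ.1 0 0)*(γ.1 0 1) + b*((γ.1 0 0)*(γ.1 1 1) + (γ.1 0 1)*(γ.1 1 0)) + 2*c*(γ.1 1 0)*(γ.1 1 1))
        (a * (γ.1 0 1)^2 + b * (γ.1 0 1) * (γ.1 1 1) + c * (γ.1 1 1)^2) := by
  ext i j
  fin_cases i <;> fin_cases j <;>
    simp [gram, Matrix.mul_apply, Fin.sum_univ_two] <;> ring

lemma gram_inj {a b c a' b' c' : ℤ} (h : gram a b c = gram a' b' c') :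
    a = a' ∧ b = b' ∧ c = c' := by
  have h0 := congrFun (congrFun h 0) 0
  have h1 := congrFun (congrFun h 0) 1
  have h2 := congrFun (congrFun h 1) 1
  simp [gram] at h0 h1 h2
  omega

lemma gram_smul (m a b c : ℤ) : m • gram a b c = gram (m*a) (m*b) (m*c) := by
  ext i j; fin_cases i <;> fin_cases j <;> simp [gram] <;> ring

lemma det_coe (γ : SL2) : (γ.1 0 0) * (γ.1 1 1) - (γ.1 0 1) * (γ.1 1 0) = 1 := by
  have := γ.2
  rw [Matrix.det_fin_two] at this
  exact this

/-- linear relations satisfied by an automorph -/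
lemma stab_linear {a b c : ℤ} {γ : SL2} (h : γ ∈ stabSet a b c) :
    a * (γ.1 1 1) = a * (γ.1 0 0) + b * (γ.1 1 0) ∧ a * (γ.1 0 1) = -(c * (γ.1 1 0)) := by
  have h' := h
  rw [stabSet, Set.mem_setOf_eq, gram_action] at h'
  obtain ⟨h1, h2, h3⟩ := gram_inj h'
  have hdet : (γ.1 0 0) * (γ.1 1 1) - (γ.1 0 1) * (γ.1 1 0) = 1 := det_coe γ
  set p := γ.1 0 0
  set q := γ.1 0 1
  set r := γ.1 1 0
  set s := γ.1 1 1
  constructor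
  · have h2' : 2 * (a * s - a * p - b * r) = 0 := by
      linear_combination (-(2*s)) * h1 + r * h2 + (2*a*p + b*r) * hdet
    linarith
  · have h2' : 2 * (a * q + c * r) = 0 := by
      linear_combination s * h2 - 2*r*h3 - (2*a*q + b*s) * hdet
    linarith

lemma gram_Tk (a b c k : ℤ) :
    (Matrix.transpose ((Tk k : SL2) : Matrix (Fin 2) (Fin 2) ℤ)) * gram a b c * ((Tk k : SL2) : Matrix (Fin 2) (Fin 2) ℤ)
      = gram a (b + 2*a*k) (a*k^2 + b*k + c) := by
  show Matrix.transpose !![1,k;0,1] * gram a b c * !![1,k;0,1] = _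
  rw [transpose_lit, gram, gram, Matrix.mul_fin_two, Matrix.mul_fin_two]
  congr 1 <;> ring

lemma gram_Sm (a b c : ℤ) :
    (Matrix.transpose ((Sm : SL2) : Matrix (Fin 2) (Fin 2) ℤ)) * gram a b c * ((Sm : SL2) : Matrix (Fin 2) (Fin 2) ℤ)
      = gram c (-b) a := by
  show Matrix.transpose !![0,-1;1,0] * gram a b c * !![0,-1;1,0] = _
  rw [transpose_lit, gram, gram, Matrix.mul_fin_two, Matrix.mul_fin_two]
  congr 1 <;> ring

lemma gram_comp {M : Matrix (Fin 2) (Fin 2) ℤ} {δ₁ δ₂ : SL2} {N P : Matrix (Fin 2) (Fin 2) ℤ}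
    (h1 : (Matrix.transpose (δ₁ : Matrix (Fin 2) (Fin 2) ℤ)) * M * (δ₁ : Matrix (Fin 2) (Fin 2) ℤ) = N)
    (h2 : (Matrix.transpose (δ₂ : Matrix (Fin 2) (Fin 2) ℤ)) * N * (δ₂ : Matrix (Fin 2) (Fin 2) ℤ) = P) :
    (Matrix.transpose ((δ₁ * δ₂ : SL2) : Matrix (Fin 2) (Fin 2) ℤ)) * M * ((δ₁ * δ₂ : SL2) : Matrix (Fin 2) (Fin 2) ℤ) = P := by
  rw [Matrix.SpecialLinearGroup.coe_mul, Matrix.transpose_mul, ← h2, ← h1]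
  noncomm_ring

lemma reduceAux : ∀ n : ℕ, ∀ a b c : ℤ, a.natAbs ≤ n → 0 < a → 0 < 4*a*c - b^2 →
    ∃ (δ : SL2) (a' b' c' : ℤ),
      (Matrix.transpose ((δ : SL2) : Matrix (Fin 2) (Fin 2) ℤ)) * gram a b c * ((δ : SL2) : Matrix (Fin 2) (Fin 2) ℤ)
        = gram a' b' c' ∧ 0 < a' ∧ b'.natAbs ≤ a'.natAbs ∧ a' ≤ c' ∧
        b'^2 - 4*a'*c' = b^2 - 4*a*c := by
  intro n
  induction n with
  | zero => intro a b c h ha _; omega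
  | succ n ih =>
    intro a b c hle ha hpd
    set k : ℤ := (a - b) / (2*a) with hk
    have h2a : 0 < 2*a := by omega
    have hmod := Int.emod_nonneg (a - b) (by omega : (2*a) ≠ 0)
    have hmod2 := Int.emod_lt_of_pos (a - b) h2a
    set b₁ := b + 2*a*k with hb1
    have hb1e : b₁ = a - (a - b) % (2 * a) := by
      rw [hb1, hk]; linarith [Int.mul_ediv_add_emod (a - b) (2*a)]
    have hb1l : -a < b₁ := by omega
    have hb1r : b₁ ≤ a := by omega
    set c₁ := a*k^2 + b*k + c with hc1
    have hdisc : b₁^2 - 4*a*c₁ = b^2 - 4*a*c := by rw [hb1, hc1]; ring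
    have hc₁pos : 0 < c₁ := by nlinarith [sq_nonneg b₁]
    by_cases hac : a ≤ c₁
    · exact ⟨Tk k, a, b₁, c₁, gram_Tk a b c k, ha, by omega, hac, by omega⟩
    · push_neg at hac
      obtain ⟨δ, a', b', c', hδ, h1, h2, h3, h4⟩ :=
        ih c₁ (-b₁) a (by omega) hc₁pos (by nlinarith)
      refine ⟨Tk k * Sm * δ, a', b', c', ?_, h1, h2, h3, by rw [h4]; ring⟩
      exact gram_comp (gram_comp (gram_Tk a b c k) (gram_Sm a b₁ c₁)) hδ

lemma reduce_small {a b c : ℤ} (ha : 0 < a) (h : b^2 - 4*a*c = -3 ∨ b^2 - 4*a*c = -4) :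
    ∃ δ : SL2,
      (Matrix.transpose ((δ : SL2) : Matrix (Fin 2) (Fin 2) ℤ)) * gram a b c * ((δ : SL2) : Matrix (Fin 2) (Fin 2) ℤ)
        = (if b^2 - 4*a*c = -3 then gram 1 1 1 else gram 1 0 1) := by
  have hpd : 0 < 4*a*c - b^2 := by rcases h with h | h <;> omega
  obtain ⟨δ, a', b', c', hδ, h1, h2, h3, h4⟩ := reduceAux a.natAbs a b c le_rfl ha hpd
  have hb2 : b'^2 ≤ a'^2 := by
    have h5 := Nat.pow_le_pow_left h2 2
    zify at h5; simpa [sq_abs] using h5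
  have hd' : b'^2 - 4*a'*c' = -3 ∨ b'^2 - 4*a'*c' = -4 := by rw [h4]; exact h
  have h6 : 4*a'*c' - b'^2 ≤ 4 := by rcases hd' with h' | h' <;> omega
  have ha'1 : a' = 1 := by
    by_contra hne
    have h7 : 2 ≤ a' := by omega
    nlinarith [mul_le_mul_of_nonneg_left h3 (by linarith : (0:ℤ) ≤ 4*a'),
      mul_nonneg (by linarith : (0:ℤ) ≤ a'-2) (by linarith : (0:ℤ) ≤ a'+2)]
  rcases h with h | h
  · rw [if_pos h]
    rw [h] at h4
    subst ha'1
    have hb'c : (b' = 1 ∧ c' = 1) ∨ (b' = -1 ∧ c' = 1) := by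
      have hbl : -1 ≤ b' := by nlinarith [sq_nonneg (b'+1)]
      have hbr : b' ≤ 1 := by nlinarith [sq_nonneg (b'-1)]
      interval_cases b' <;> omega
    rcases hb'c with ⟨hb', hc'⟩ | ⟨hb', hc'⟩
    · exact ⟨δ, by rw [hδ, hb', hc']⟩
    · refine ⟨δ * Tk 1, ?_⟩
      have := gram_comp hδ (gram_Tk 1 b' c' 1)
      rw [hb', hc'] at this
      rw [this]; norm_num
  · rw [if_neg (by omega)]
    rw [h] at h4
    subst ha'1
    have hb'c : b' = 0 ∧ c' = 1 := by
      have hbl : -1 ≤ b' := by nlinarith [sq_nonneg (b'+1)]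
      have hbr : b' ≤ 1 := by nlinarith [sq_nonneg (b'-1)]
      interval_cases b' <;> omega
    exact ⟨δ, by rw [hδ, hb'c.1, hb'c.2]⟩

/- center facts -/
lemma negI_coe : ((negI : SL2) : Matrix (Fin 2) (Fin 2) ℤ) = -1 := by
  ext i j; fin_cases i <;> fin_cases j <;> simp [negI, Matrix.one_apply]

lemma negI_mem_center : negI ∈ Subgroup.center SL2 := by
  rw [Subgroup.mem_center_iff]
  intro g
  apply Subtype.ext
  rw [Matrix.SpecialLinearGroup.coe_mul, Matrix.SpecialLinearGroup.coe_mul, negI_coe,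
    mul_neg_one, neg_one_mul]

lemma mk_negI_eq_one : (QuotientGroup.mk negI : SL2 ⧸ Subgroup.center SL2) = 1 :=
  (QuotientGroup.eq_one_iff _).mpr negI_mem_center

lemma u_not_center : u ∉ Subgroup.center SL2 := by
  intro h
  have h2 := Subgroup.mem_center_iff.mp h (Tk 1)
  have h3 := congrArg (fun m : SL2 => (m : Matrix (Fin 2) (Fin 2) ℤ) 0 0) h2
  simp only [Matrix.SpecialLinearGroup.coe_mul] at h3
  simp [Tk, u, Matrix.SpecialLinearGroup.coe_mul, Matrix.mul_apply, Fin.sum_univ_two] at h3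

lemma u2_not_center : u2 ∉ Subgroup.center SL2 := by
  intro h
  have h2 := Subgroup.mem_center_iff.mp h (Tk 1)
  have h3 := congrArg (fun m : SL2 => (m : Matrix (Fin 2) (Fin 2) ℤ) 0 0) h2
  simp only [Matrix.SpecialLinearGroup.coe_mul] at h3
  simp [Tk, u2, Matrix.SpecialLinearGroup.coe_mul, Matrix.mul_apply, Fin.sum_univ_two] at h3

lemma Sm_not_center : Sm ∉ Subgroup.center SL2 := by
  intro h
  have h2 := Subgroup.mem_center_iff.mp h (Tk 1)
  have h3 := congrArg (fun m : SL2 => (m : Matrix (Fin 2) (Fin 2) ℤ) 0 0) h2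
  simp only [Matrix.SpecialLinearGroup.coe_mul] at h3
  simp [Tk, Sm, Matrix.SpecialLinearGroup.coe_mul, Matrix.mul_apply, Fin.sum_univ_two] at h3

/- memberships -/
lemma one_mem_stab (a b c : ℤ) : (1 : SL2) ∈ stabSet a b c := by
  simp [stabSet]

lemma negI_mem_stab (a b c : ℤ) : negI ∈ stabSet a b c := by
  show (Matrix.transpose ((negI : SL2) : Matrix (Fin 2) (Fin 2) ℤ)) * gram a b c * _ = _
  rw [negI_coe]
  simp

lemma u_mem_stab : u ∈ stabSet 1 1 1 := by
  show Matrix.transpose !![0,-1;1,1] * gram 1 1 1 * !![0,-1;1,1] = gram 1 1 1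
  rw [transpose_lit]
  simp only [gram]
  rw [Matrix.mul_fin_two, Matrix.mul_fin_two]
  norm_num

lemma u2_mem_stab : u2 ∈ stabSet 1 1 1 := by
  show Matrix.transpose !![-1,-1;1,0] * gram 1 1 1 * !![-1,-1;1,0] = gram 1 1 1
  rw [transpose_lit]
  simp only [gram]
  rw [Matrix.mul_fin_two, Matrix.mul_fin_two]
  norm_num

lemma Sm_mem_stab : Sm ∈ stabSet 1 0 1 := by
  show Matrix.transpose !![0,-1;1,0] * gram 1 0 1 * !![0,-1;1,0] = gram 1 0 1
  rw [transpose_lit]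
  simp only [gram]
  rw [Matrix.mul_fin_two, Matrix.mul_fin_two]
  norm_num

/- classification of the stabilizers of the two special forms -/
lemma stab111_sub {γ : SL2} (h : γ ∈ stabSet 1 1 1) :
    γ = 1 ∨ γ = negI ∨ γ = u ∨ γ = nu ∨ γ = u2 ∨ γ = nu2 := by
  obtain ⟨G1, G2⟩ := stab_linear h
  have hdet := det_coe γ
  set p := γ.1 0 0 with hp
  set q := γ.1 0 1 with hq
  set r := γ.1 1 0 with hr
  set s := γ.1 1 1 with hs
  have hs' : s = p + r := by linarith
  have hq' : q = -r := by linarith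
  have key : (2*p + r)^2 + 3*r^2 = 4 := by
    linear_combination 4*hdet - 4*p*hs' + 4*r*hq'
  have hr1 : -1 ≤ r := by nlinarith [sq_nonneg (2*p+r), sq_nonneg (r+1)]
  have hr2 : r ≤ 1 := by nlinarith [sq_nonneg (2*p+r), sq_nonneg (r-1)]
  interval_cases r
  · have h0 : (2*p-1)*(2*p-1) = 1 := by nlinarith
    have := mul_self_eq_one_iff.mp h0
    have hpv : p = 1 ∨ p = 0 := by omega
    rcases hpv with hpv | hpv
    · refine Or.inr (Or.inr (Or.inr (Or.inr (Or.inr ?_))))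
      apply SL2_ext <;> simp [nu2, ← hp, ← hq, ← hr, ← hs] <;> omega
    · refine Or.inr (Or.inr (Or.inr (Or.inl ?_)))
      apply SL2_ext <;> simp [nu, ← hp, ← hq, ← hr, ← hs] <;> omega
  · have h0 : p * p = 1 := by nlinarith
    have hpv := mul_self_eq_one_iff.mp h0
    rcases hpv with hpv | hpv
    · refine Or.inl ?_
      apply SL2_ext <;>
        simp [← hp, ← hq, ← hr, ← hs, Matrix.SpecialLinearGroup.coe_one, Matrix.one_apply] <;> omega
    · refine Or.inr (Or.inl ?_)
      apply SL2_ext <;> simp [negI, ← hp, ← hq, ← hr, ← hs] <;> omega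
  · have h0 : (2*p+1)*(2*p+1) = 1 := by nlinarith
    have := mul_self_eq_one_iff.mp h0
    have hpv : p = 0 ∨ p = -1 := by omega
    rcases hpv with hpv | hpv
    · refine Or.inr (Or.inr (Or.inl ?_))
      apply SL2_ext <;> simp [u, ← hp, ← hq, ← hr, ← hs] <;> omega
    · refine Or.inr (Or.inr (Or.inr (Or.inr (Or.inl ?_))))
      apply SL2_ext <;> simp [u2, ← hp, ← hq, ← hr, ← hs] <;> omega

lemma stab101_sub {γ : SL2} (h : γ ∈ stabSet 1 0 1) :
    γ = 1 ∨ γ = negI ∨ γ = Sm ∨ γ = nS := by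
  obtain ⟨G1, G2⟩ := stab_linear h
  have hdet := det_coe γ
  set p := γ.1 0 0 with hp
  set q := γ.1 0 1 with hq
  set r := γ.1 1 0 with hr
  set s := γ.1 1 1 with hs
  have hs' : s = p := by linarith
  have hq' : q = -r := by linarith
  have key : p^2 + r^2 = 1 := by
    linear_combination hdet - p*hs' + r*hq'
  have hr1 : -1 ≤ r := by nlinarith [sq_nonneg p, sq_nonneg (r+1)]
  have hr2 : r ≤ 1 := by nlinarith [sq_nonneg p, sq_nonneg (r-1)]
  interval_cases r
  · have h0 : p * p = 0 := by nlinarith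
    have hpv : p = 0 := by nlinarith
    refine Or.inr (Or.inr (Or.inr ?_))
    apply SL2_ext <;> simp [nS, ← hp, ← hq, ← hr, ← hs] <;> omega
  · have h0 : p * p = 1 := by nlinarith
    have hpv := mul_self_eq_one_iff.mp h0
    rcases hpv with hpv | hpv
    · refine Or.inl ?_
      apply SL2_ext <;>
        simp [← hp, ← hq, ← hr, ← hs, Matrix.SpecialLinearGroup.coe_one, Matrix.one_apply] <;> omega
    · refine Or.inr (Or.inl ?_)
      apply SL2_ext <;> simp [negI, ← hp, ← hq, ← hr, ← hs] <;> omega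
  · have h0 : p * p = 0 := by nlinarith
    have hpv : p = 0 := by nlinarith
    refine Or.inr (Or.inr (Or.inl ?_))
    apply SL2_ext <;> simp [Sm, ← hp, ← hq, ← hr, ← hs] <;> omega

abbrev PSL := SL2 ⧸ Subgroup.center SL2

lemma hnu_eq : nu = negI * u := by
  apply SL2_ext <;> simp only [Matrix.SpecialLinearGroup.coe_mul] <;>
    simp [nu, negI, u, Matrix.SpecialLinearGroup.coe_mul, Matrix.mul_apply, Fin.sum_univ_two]

lemma hnu2_eq : nu2 = negI * u2 := by
  apply SL2_ext <;> simp only [Matrix.SpecialLinearGroup.coe_mul] <;>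
    simp [nu2, negI, u2, Matrix.SpecialLinearGroup.coe_mul, Matrix.mul_apply, Fin.sum_univ_two]

lemma hnS_eq : nS = negI * Sm := by
  apply SL2_ext <;> simp only [Matrix.SpecialLinearGroup.coe_mul] <;>
    simp [nS, negI, Sm, Matrix.SpecialLinearGroup.coe_mul, Matrix.mul_apply, Fin.sum_univ_two]

lemma huu_eq : u2 = u * u := by
  apply SL2_ext <;> simp only [Matrix.SpecialLinearGroup.coe_mul] <;>
    simp [u2, u, Matrix.SpecialLinearGroup.coe_mul, Matrix.mul_apply, Fin.sum_univ_two]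

lemma mk_mul' (x y : SL2) :
    (QuotientGroup.mk (x * y) : PSL) = QuotientGroup.mk x * QuotientGroup.mk y := rfl

lemma stabPSL111 : stabPSL 1 1 1 =
    {(1 : PSL), QuotientGroup.mk u, QuotientGroup.mk u2} := by
  ext x
  simp only [stabPSL, Set.mem_image]
  constructor
  · rintro ⟨γ, hγ, rfl⟩
    rcases stab111_sub hγ with h | h | h | h | h | h <;> subst h
    · simp
    · simp [mk_negI_eq_one]
    · simp
    · rw [hnu_eq, mk_mul', mk_negI_eq_one, one_mul]; simp
    · simp
    · rw [hnu2_eq, mk_mul', mk_negI_eq_one, one_mul]; simp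
  · intro hx
    rcases hx with h | h | h
    · exact ⟨1, one_mem_stab 1 1 1, by rw [h]; rfl⟩
    · exact ⟨u, u_mem_stab, by rw [h]⟩
    · exact ⟨u2, u2_mem_stab, by rw [h]⟩

lemma stabPSL101 : stabPSL 1 0 1 = {(1 : PSL), QuotientGroup.mk Sm} := by
  ext x
  simp only [stabPSL, Set.mem_image]
  constructor
  · rintro ⟨γ, hγ, rfl⟩
    rcases stab101_sub hγ with h | h | h | h <;> subst h
    · simp
    · simp [mk_negI_eq_one]
    · simp
    · rw [hnS_eq, mk_mul', mk_negI_eq_one, one_mul]; simp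
  · intro hx
    rcases hx with h | h
    · exact ⟨1, one_mem_stab 1 0 1, by rw [h]; rfl⟩
    · exact ⟨Sm, Sm_mem_stab, by rw [h]⟩

lemma mku_ne_one : (QuotientGroup.mk u : PSL) ≠ 1 := by
  intro h
  exact u_not_center ((QuotientGroup.eq_one_iff _).mp h)

lemma mku2_ne_one : (QuotientGroup.mk u2 : PSL) ≠ 1 := by
  intro h
  exact u2_not_center ((QuotientGroup.eq_one_iff _).mp h)

lemma mkSm_ne_one : (QuotientGroup.mk Sm : PSL) ≠ 1 := by
  intro h
  exact Sm_not_center ((QuotientGroup.eq_one_iff _).mp h)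

lemma mku_ne_mku2 : (QuotientGroup.mk u : PSL) ≠ QuotientGroup.mk u2 := by
  intro h
  rw [huu_eq, mk_mul'] at h
  have h2 : (QuotientGroup.mk u : PSL) * 1 = QuotientGroup.mk u * QuotientGroup.mk u := by
    rw [mul_one]; exact h
  have h3 := mul_left_cancel h2
  exact mku_ne_one h3.symm

lemma card111 : Nat.card (stabPSL 1 1 1) = 3 := by
  rw [stabPSL111, Nat.card_coe_set_eq]
  have h1 : (1 : PSL) ∉ ({QuotientGroup.mk u, QuotientGroup.mk u2} : Set PSL) := by
    simp only [Set.mem_insert_iff, Set.mem_singleton_iff]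
    push_neg
    exact ⟨fun h => mku_ne_one h.symm, fun h => mku2_ne_one h.symm⟩
  rw [Set.ncard_insert_of_notMem h1, Set.ncard_pair mku_ne_mku2]

lemma card101 : Nat.card (stabPSL 1 0 1) = 2 := by
  rw [stabPSL101, Nat.card_coe_set_eq]
  rw [Set.ncard_pair (fun h => mkSm_ne_one h.symm)]

/- invariance of the stabilizer cardinality under equivalence -/
lemma smul_cancel {m : ℤ} (hm : m ≠ 0) {X Y : Matrix (Fin 2) (Fin 2) ℤ}
    (h : m • X = m • Y) : X = Y := by
  ext i j
  have := congrFun (congrFun h i) j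
  simp only [Matrix.smul_apply, smul_eq_mul] at this
  exact mul_left_cancel₀ hm this

lemma det_gram (a b c : ℤ) : (gram a b c).det = 4*a*c - b^2 := by
  rw [gram, Matrix.det_fin_two_of]; ring

lemma coe_inv_mul (γ : SL2) :
    ((γ⁻¹ : SL2) : Matrix (Fin 2) (Fin 2) ℤ) * (γ : Matrix (Fin 2) (Fin 2) ℤ) = 1 := by
  rw [← Matrix.SpecialLinearGroup.coe_mul, inv_mul_cancel,
    Matrix.SpecialLinearGroup.coe_one]

lemma coe_mul_inv (γ : SL2) :
    (γ : Matrix (Fin 2) (Fin 2) ℤ) * ((γ⁻¹ : SL2) : Matrix (Fin 2) (Fin 2) ℤ) = 1 := by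
  rw [← Matrix.SpecialLinearGroup.coe_mul, mul_inv_cancel,
    Matrix.SpecialLinearGroup.coe_one]

lemma card_invariant {a b c a₀ b₀ c₀ : ℤ} (h4 : 4*a*c - b^2 ≠ 0)
    (h : EquivToMultOf a b c a₀ b₀ c₀) :
    Nat.card (stabPSL a b c) = Nat.card (stabPSL a₀ b₀ c₀) := by
  obtain ⟨γ, m, hγ⟩ := h
  set G : Matrix (Fin 2) (Fin 2) ℤ := (γ : Matrix (Fin 2) (Fin 2) ℤ) with hG
  set Gi : Matrix (Fin 2) (Fin 2) ℤ := ((γ⁻¹ : SL2) : Matrix (Fin 2) (Fin 2) ℤ) with hGi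
  have hGiG : Gi * G = 1 := coe_inv_mul γ
  have hGGi : G * Gi = 1 := coe_mul_inv γ
  have hm : m ≠ 0 := by
    intro hm0
    subst hm0
    rw [zero_smul] at hγ
    have hdet := congrArg Matrix.det hγ
    rw [Matrix.det_mul, Matrix.det_mul, Matrix.det_transpose] at hdet
    rw [γ.2, det_gram] at hdet
    simp at hdet
    omega
  -- recover M from M₀
  have hM : gram a b c = Matrix.transpose Gi * (m • gram a₀ b₀ c₀) * Gi := by
    rw [← hγ]
    calc gram a b c = (Matrix.transpose Gi * Matrix.transpose G) * gram a b c * (G * Gi) := by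
          rw [← Matrix.transpose_mul, hGGi, Matrix.transpose_one, one_mul, mul_one]
      _ = Matrix.transpose Gi * (Matrix.transpose G * gram a b c * G) * Gi := by
          noncomm_ring
  -- the stabilizers are conjugate
  have hset : stabSet a₀ b₀ c₀ = (fun δ => γ⁻¹ * δ * γ) '' stabSet a b c := by
    ext δ'
    constructor
    · intro hδ'
      refine ⟨γ * δ' * γ⁻¹, ?_, by group⟩
      show Matrix.transpose ((γ * δ' * γ⁻¹ : SL2) : Matrix (Fin 2) (Fin 2) ℤ) * gram a b c *
        ((γ * δ' * γ⁻¹ : SL2) : Matrix (Fin 2) (Fin 2) ℤ) = gram a b c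
      rw [Matrix.SpecialLinearGroup.coe_mul, Matrix.SpecialLinearGroup.coe_mul, ← hG, ← hGi]
      have hδ'' : Matrix.transpose ((δ' : SL2) : Matrix (Fin 2) (Fin 2) ℤ) * (m • gram a₀ b₀ c₀) *
          ((δ' : SL2) : Matrix (Fin 2) (Fin 2) ℤ) = m • gram a₀ b₀ c₀ := by
        rw [Matrix.mul_smul, Matrix.smul_mul, hδ']
      calc Matrix.transpose (G * (δ' : Matrix (Fin 2) (Fin 2) ℤ) * Gi) * gram a b c * (G * (δ' : Matrix (Fin 2) (Fin 2) ℤ) * Gi)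
          = Matrix.transpose Gi * (Matrix.transpose (δ' : Matrix (Fin 2) (Fin 2) ℤ) *
              ((Matrix.transpose G * gram a b c) * G) * (δ' : Matrix (Fin 2) (Fin 2) ℤ)) * Gi := by
            rw [Matrix.transpose_mul, Matrix.transpose_mul]
            noncomm_ring
        _ = gram a b c := by
            rw [show Matrix.transpose G * gram a b c * G = m • gram a₀ b₀ c₀ from hγ] at *
            rw [hδ'', ← hM]
    · rintro ⟨δ, hδ, rfl⟩
      show Matrix.transpose ((γ⁻¹ * δ * γ : SL2) : Matrix (Fin 2) (Fin 2) ℤ) * gram a₀ b₀ c₀ *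
        ((γ⁻¹ * δ * γ : SL2) : Matrix (Fin 2) (Fin 2) ℤ) = gram a₀ b₀ c₀
      apply smul_cancel hm
      rw [Matrix.SpecialLinearGroup.coe_mul, Matrix.SpecialLinearGroup.coe_mul, ← hG, ← hGi]
      have hδm : Matrix.transpose (δ : Matrix (Fin 2) (Fin 2) ℤ) * gram a b c * (δ : Matrix (Fin 2) (Fin 2) ℤ) = gram a b c := hδ
      calc m • (Matrix.transpose (Gi * (δ : Matrix (Fin 2) (Fin 2) ℤ) * G) * gram a₀ b₀ c₀ * (Gi * (δ : Matrix (Fin 2) (Fin 2) ℤ) * G))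
          = Matrix.transpose (Gi * (δ : Matrix (Fin 2) (Fin 2) ℤ) * G) * (m • gram a₀ b₀ c₀) * (Gi * (δ : Matrix (Fin 2) (Fin 2) ℤ) * G) := by
            rw [Matrix.mul_smul, Matrix.smul_mul]
        _ = Matrix.transpose G * (Matrix.transpose (δ : Matrix (Fin 2) (Fin 2) ℤ) *
              (Matrix.transpose Gi * (m • gram a₀ b₀ c₀) * Gi) * (δ : Matrix (Fin 2) (Fin 2) ℤ)) * G := by
            rw [Matrix.transpose_mul, Matrix.transpose_mul]
            noncomm_ring
        _ = Matrix.transpose G * gram a b c * G := by rw [← hM, hδm]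
        _ = m • gram a₀ b₀ c₀ := hγ
  -- pass to the quotient
  set g : PSL := QuotientGroup.mk γ with hg
  have himg : stabPSL a₀ b₀ c₀ = (fun x => g⁻¹ * x * g) '' stabPSL a b c := by
    rw [stabPSL, stabPSL, hset, Set.image_image, Set.image_image]
    apply Set.image_congr
    intro δ _
    show (QuotientGroup.mk (γ⁻¹ * δ * γ) : PSL) = g⁻¹ * QuotientGroup.mk δ * g
    rfl
  rw [himg]
  have hinj : Function.Injective (fun x : PSL => g⁻¹ * x * g) := by
    intro x y hxy
    simp only at hxy
    have := congrArg (fun z => g * z * g⁻¹) hxy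
    simpa [mul_assoc] using this
  rw [Nat.card_image_of_injective hinj]

/- producing an equivalence from a non-central automorph -/
lemma equiv_mk {a b c A B C x e : ℤ} (he : e ≠ 0)
    (hs1 : a * A = e * a) (hs2 : a * B = e * b) (hs3 : a * C = e * c)
    (δ : SL2)
    (hδ : (Matrix.transpose ((δ : SL2) : Matrix (Fin 2) (Fin 2) ℤ)) * gram A B C *
      ((δ : SL2) : Matrix (Fin 2) (Fin 2) ℤ) = gram 1 x 1) :
    EquivToMultOf a b c 1 x 1 := by
  rw [gram_action] at hδ
  obtain ⟨hf1, hf2, hf3⟩ := gram_inj hδ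
  set p := δ.1 0 0
  set q := δ.1 0 1
  set r := δ.1 1 0
  set s := δ.1 1 1
  refine ⟨δ, a * p^2 + b * p * r + c * r^2, ?_⟩
  rw [gram_action, gram_smul]
  have hg1 : e * (a * p^2 + b * p * r + c * r^2) = a := by
    linear_combination (-(p^2)) * hs1 - (p*r) * hs2 - (r^2) * hs3 + a * hf1
  have hg2 : e * (2*a*p*q + b*(p*s + q*r) + 2*c*r*s) = a * x := by
    linear_combination (-(2*p*q)) * hs1 - (p*s + q*r) * hs2 - (2*r*s) * hs3 + a * hf2
  have hg3 : e * (a * q^2 + b * q * s + c * s^2) = a := by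
    linear_combination (-(q^2)) * hs1 - (q*s) * hs2 - (s^2) * hs3 + a * hf3
  have e2 : 2*a*p*q + b*(p*s + q*r) + 2*c*r*s = (a * p^2 + b * p * r + c * r^2) * x := by
    apply mul_left_cancel₀ he
    rw [hg2, ← mul_assoc, hg1]
  have e3 : a * q^2 + b * q * s + c * s^2 = a * p^2 + b * p * r + c * r^2 := by
    apply mul_left_cancel₀ he
    rw [hg1, hg3]
  rw [e2, e3]
  congr 1 <;> ring

/-- a stabilizer element other than `±1` forces the form to be equivalent to a
multiple of one of the two special forms -/
lemma special_of_stab {a b c : ℤ} (ha : 0 < a) (hd : b ^ 2 - 4 * a * c < 0)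
    {γ : SL2} (h : γ ∈ stabSet a b c) (h1 : γ ≠ 1) (h2 : γ ≠ negI) :
    EquivToMultOf a b c 1 1 1 ∨ EquivToMultOf a b c 1 0 1 := by
  obtain ⟨G1, G2⟩ := stab_linear h
  have hdet := det_coe γ
  set p := γ.1 0 0 with hp
  set q := γ.1 0 1 with hq
  set r := γ.1 1 0 with hr
  set s := γ.1 1 1 with hs
  have key : a^2*(p+s)^2 - (b^2 - 4*a*c)*r^2 = 4*a^2 := by
    linear_combination (a*s - a*p + b*r) * G1 + 4*a^2 * hdet + 4*a*r * G2
  have hrne : r ≠ 0 := by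
    intro hr0
    rw [hr0] at G1 G2 key
    have hq0 : q = 0 := by
      have : a * q = 0 := by linarith
      exact (mul_eq_zero.mp this).resolve_left (by omega)
    have hsp : s = p := by
      have : a * s = a * p := by linarith
      exact mul_left_cancel₀ (by omega) this
    rw [hq0, hsp] at hdet
    simp at hdet
    rcases mul_self_eq_one_iff.mp hdet with hpv | hpv
    · exact h1 (SL2_ext
        (by rw [← hp, hpv]; simp [Matrix.one_apply])
        (by rw [← hq, hq0]; simp [Matrix.one_apply])
        (by rw [← hr, hr0]; simp [Matrix.one_apply])
        (by rw [← hs, hsp, hpv]; simp [Matrix.one_apply]))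
    · exact h2 (SL2_ext
        (by rw [← hp, hpv]; rfl)
        (by rw [← hq, hq0]; rfl)
        (by rw [← hr, hr0]; rfl)
        (by rw [← hs, hsp, hpv]; rfl))
  have h1r : 1 ≤ r^2 := by rcases hrne.lt_or_gt with h' | h' <;> nlinarith
  have ha2 : 0 < a^2 := by positivity
  have ht4 : (p+s)^2 ≤ 3 := by nlinarith
  set e : ℤ := if 0 < r then 1 else -1 with he
  have he2 : e^2 = 1 := by by_cases h' : 0 < r <;> simp [he, h']
  have hepos : 0 < e * r := by
    by_cases h' : 0 < r
    · simpa [he, h'] using h'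
    · rw [he, if_neg h']
      omega
  set A := e * r with hA
  set B := e * (s - p) with hB
  set C := -(e * q) with hC
  have hs1 : a * A = (e*r) * a := by rw [hA]; ring
  have hs2 : a * B = (e*r) * b := by rw [hB]; linear_combination e * G1
  have hs3 : a * C = (e*r) * c := by rw [hC]; linear_combination (-e) * G2
  have hdiscF : B^2 - 4*A*C = (p+s)^2 - 4 := by
    rw [hA, hB, hC]
    linear_combination ((s-p)^2 + 4*r*q) * he2 - 4*hdet
  have hApos : 0 < A := hepos
  have hene : e * r ≠ 0 := by omega
  have htle : -2 ≤ p + s ∧ p + s ≤ 2 := by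
    constructor <;> nlinarith [sq_nonneg (p+s+2), sq_nonneg (p+s-2)]
  have htcases : (p+s)^2 = 1 ∨ (p+s)^2 = 0 := by
    obtain ⟨hl, hr'⟩ := htle
    interval_cases h' : (p + s) <;> omega
  rcases htcases with ht | ht
  · left
    have hd3 : B^2 - 4*A*C = -3 := by omega
    obtain ⟨δ, hδ⟩ := reduce_small hApos (Or.inl hd3)
    rw [if_pos hd3] at hδ
    exact equiv_mk hene hs1 hs2 hs3 δ hδ
  · right
    have hd4 : B^2 - 4*A*C = -4 := by omega
    obtain ⟨δ, hδ⟩ := reduce_small hApos (Or.inr hd4)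
    rw [if_neg (by omega)] at hδ
    exact equiv_mk hene hs1 hs2 hs3 δ hδ

end Aux

theorem stmt0 (a b c : ℤ) (ha : 0 < a) (hd : b ^ 2 - 4 * a * c < 0) :
    (EquivToMultOf a b c 1 1 1 → Nat.card (stabPSL a b c) = 3) ∧
    (EquivToMultOf a b c 1 0 1 → Nat.card (stabPSL a b c) = 2) ∧
    (¬ EquivToMultOf a b c 1 1 1 ∧ ¬ EquivToMultOf a b c 1 0 1 →
      Nat.card (stabPSL a b c) = 1) := by
  have h4 : 4*a*c - b^2 ≠ 0 := by omega
  refine ⟨fun h => (Aux.card_invariant h4 h).trans Aux.card111,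
          fun h => (Aux.card_invariant h4 h).trans Aux.card101, ?_⟩
  rintro ⟨hn1, hn2⟩
  have hset : stabPSL a b c = {(1 : Aux.PSL)} := by
    ext x
    simp only [stabPSL, Set.mem_image, Set.mem_singleton_iff]
    constructor
    · rintro ⟨γ, hγ, rfl⟩
      by_cases hg1 : γ = 1
      · rw [hg1]; rfl
      by_cases hg2 : γ = Aux.negI
      · rw [hg2]; exact Aux.mk_negI_eq_one
      · rcases Aux.special_of_stab ha hd hγ hg1 hg2 with h | h
        · exact absurd h hn1
        · exact absurd h hn2
    · intro hx
      exact ⟨1, Aux.one_mem_stab a b c, by rw [hx]; rfl⟩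
  rw [hset, Nat.card_coe_set_eq, Set.ncard_singleton]
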